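/- Let d_A, d_B ≥ 1. For each a ∈ {0,1,2} let {M_{x₀x₁|a}}_{(x₀,x₁)∈{0,1}²} be positive semidefinite d_A×d_A complex matrices with ∑_{x₀x₁} M_{x₀x₁|a} = I, and for each b ∈ {0,1,2} let {N_{y₀y₁|b}}_{(y₀,y₁)∈{0,1}²} be positive semidefinite d_B×d_B complex matrices with ∑_{y₀y₁} N_{y₀y₁|b} = I. Let ρ ∈ ℂ^{d_A}⊗ℂ^{d_B} be a unit vector, and suppose the strategy wins the magic square game with probability at least 1−ε, i.e., (1/9)·∑_{a,b∈{0,1,2}} ∑_{(x₀,x₁),(y₀,y₁): x_b = y_a} ⟨ρ| (M_{x₀x₁|a} ⊗ N_{y₀y₁|b}) |ρ⟩ ≥ 1 − ε, where x = (x₀, x₁, x₀⊕x₁) and y = (y₀, y₁, y₀⊕y₁⊕1). Then Re⟨ρ| (X₁ ⊗ X₃) |ρ⟩ ≥ 1 − 18ε, where X₁ = ∑_{(x₀,x₁)} (−1)^{x₁} M_{x₀x₁|1} and X₃ = ∑_{(y₀,y₁)} (−1)^{y₁} N_{y₀y₁|1}. -/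

import Mathlib

open Matrix
open scoped Matrix Kronecker ComplexOrder

/-- Alice's full output triple `x = (x₀, x₁, x₀ ⊕ x₁)`. -/
def xtrip (x0 x1 : Bool) : Fin 3 → Bool := ![x0, x1, xor x0 x1]

/-- Bob's full output triple `y = (y₀, y₁, y₀ ⊕ y₁ ⊕ 1)`. -/
def ytrip (y0 y1 : Bool) : Fin 3 → Bool := ![y0, y1, !(xor y0 y1)]

/-- Derivation of Eq. (37) in Appendix B: a quantum strategy (POVMs `M`, `N` and
a shared unit vector `ρ`) winning the magic square game with probability at
least `1 − ε` satisfies the correlation bound `Re⟨ρ| X₁ ⊗ X₃ |ρ⟩ ≥ 1 − 18ε`,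
where `X₁ = ∑ (−1)^{x₁} M_{x₀x₁|1}` and `X₃ = ∑ (−1)^{y₁} N_{y₀y₁|1}`. -/
theorem kronPSD {dA dB : ℕ} (A : Matrix (Fin dA) (Fin dA) ℂ) (B : Matrix (Fin dB) (Fin dB) ℂ)
    (hA : A.PosSemidef) (hB : B.PosSemidef) : (A ⊗ₖ B).PosSemidef := by
  exact hA.kronecker hB

theorem stmt_17
    (dA dB : ℕ) (hdA : 1 ≤ dA) (hdB : 1 ≤ dB) (ε : ℝ)
    (M : Fin 3 → Bool → Bool → Matrix (Fin dA) (Fin dA) ℂ)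
    (N : Fin 3 → Bool → Bool → Matrix (Fin dB) (Fin dB) ℂ)
    (hMpsd : ∀ a x0 x1, (M a x0 x1).PosSemidef)
    (hMsum : ∀ a, ∑ x0 : Bool, ∑ x1 : Bool, M a x0 x1 = 1)
    (hNpsd : ∀ b y0 y1, (N b y0 y1).PosSemidef)
    (hNsum : ∀ b, ∑ y0 : Bool, ∑ y1 : Bool, N b y0 y1 = 1)
    (ρ : Fin dA × Fin dB → ℂ) (hρ : ∑ p, ‖ρ p‖ ^ 2 = 1)
    (hwin : 1 - ε ≤
      ((1 / 9 : ℂ) * ∑ a : Fin 3, ∑ b : Fin 3,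
        ∑ x0 : Bool, ∑ x1 : Bool, ∑ y0 : Bool, ∑ y1 : Bool,
          if xtrip x0 x1 b = ytrip y0 y1 a
            then star ρ ⬝ᵥ ((M a x0 x1 ⊗ₖ N b y0 y1) *ᵥ ρ) else 0).re) :
    1 - 18 * ε ≤
      (star ρ ⬝ᵥ
        (((∑ x0 : Bool, ∑ x1 : Bool, (if x1 then (-1 : ℂ) else 1) • M 1 x0 x1) ⊗ₖ
          (∑ y0 : Bool, ∑ y1 : Bool, (if y1 then (-1 : ℂ) else 1) • N 1 y0 y1)) *ᵥ ρ)).re := by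
  classical
  -- abbreviation for the real quadratic forms
  set Q : Fin 3 → Fin 3 → Bool → Bool → Bool → Bool → ℝ :=
    fun a b x0 x1 y0 y1 => (star ρ ⬝ᵥ ((M a x0 x1 ⊗ₖ N b y0 y1) *ᵥ ρ)).re with hQdef
  have hQnn : ∀ a b x0 x1 y0 y1, 0 ≤ Q a b x0 x1 y0 y1 := by
    intro a b x0 x1 y0 y1
    have h := (kronPSD _ _ (hMpsd a x0 x1) (hNpsd b y0 y1)).dotProduct_mulVec_nonneg ρ
    simpa [hQdef] using (Complex.le_def.mp h).1
  -- the state is normalized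
  have hρC : star ρ ⬝ᵥ ρ = (1 : ℂ) := by
    have h1 : star ρ ⬝ᵥ ρ = ∑ p, (‖ρ p‖ ^ 2 : ℂ) := by
      refine Finset.sum_congr rfl fun p _ => ?_
      rw [Pi.star_apply, Complex.star_def, ← Complex.normSq_eq_conj_mul_self,
        Complex.normSq_eq_norm_sq]
      push_cast
      ring
    rw [h1]
    norm_cast
  -- total probability is 1 for each input pair
  have htot : ∀ a b : Fin 3,
      ∑ x0 : Bool, ∑ x1 : Bool, ∑ y0 : Bool, ∑ y1 : Bool, Q a b x0 x1 y0 y1 = 1 := by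
    intro a b
    have h1 : ∑ x0 : Bool, ∑ x1 : Bool, ∑ y0 : Bool, ∑ y1 : Bool,
        star ρ ⬝ᵥ ((M a x0 x1 ⊗ₖ N b y0 y1) *ᵥ ρ)
        = star ρ ⬝ᵥ ((((∑ x0 : Bool, ∑ x1 : Bool, M a x0 x1) ⊗ₖ
            (∑ y0 : Bool, ∑ y1 : Bool, N b y0 y1)) : Matrix (Fin dA × Fin dB) (Fin dA × Fin dB) ℂ) *ᵥ ρ) := by
      simp only [Fintype.sum_bool, Matrix.add_kronecker, Matrix.kronecker_add,
        Matrix.add_mulVec, dotProduct_add]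
      ring
    have h2 : (∑ x0 : Bool, ∑ x1 : Bool, ∑ y0 : Bool, ∑ y1 : Bool,
        star ρ ⬝ᵥ ((M a x0 x1 ⊗ₖ N b y0 y1) *ᵥ ρ)) = 1 := by
      rw [h1, hMsum, hNsum, Matrix.one_kronecker_one, Matrix.one_mulVec, hρC]
    calc ∑ x0 : Bool, ∑ x1 : Bool, ∑ y0 : Bool, ∑ y1 : Bool, Q a b x0 x1 y0 y1
        = (∑ x0 : Bool, ∑ x1 : Bool, ∑ y0 : Bool, ∑ y1 : Bool,
            star ρ ⬝ᵥ ((M a x0 x1 ⊗ₖ N b y0 y1) *ᵥ ρ)).re := by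
          simp [hQdef, Complex.add_re, Fintype.sum_bool]
      _ = 1 := by rw [h2]; rfl
  -- winning probability on each input pair
  set W : Fin 3 → Fin 3 → ℝ := fun a b =>
    ∑ x0 : Bool, ∑ x1 : Bool, ∑ y0 : Bool, ∑ y1 : Bool,
      if xtrip x0 x1 b = ytrip y0 y1 a then Q a b x0 x1 y0 y1 else 0 with hWdef
  have hW1 : ∀ a b, W a b ≤ 1 := by
    intro a b
    rw [← htot a b]
    refine Finset.sum_le_sum fun x0 _ => Finset.sum_le_sum fun x1 _ =>
      Finset.sum_le_sum fun y0 _ => Finset.sum_le_sum fun y1 _ => ?_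
    split_ifs with h
    · exact le_rfl
    · exact hQnn a b x0 x1 y0 y1
  have hwinR : 1 - ε ≤ (1 / 9) * ∑ a : Fin 3, ∑ b : Fin 3, W a b := by
    have hre : ((1 / 9 : ℂ) * ∑ a : Fin 3, ∑ b : Fin 3,
        ∑ x0 : Bool, ∑ x1 : Bool, ∑ y0 : Bool, ∑ y1 : Bool,
          if xtrip x0 x1 b = ytrip y0 y1 a
            then star ρ ⬝ᵥ ((M a x0 x1 ⊗ₖ N b y0 y1) *ᵥ ρ) else 0).re
        = (1 / 9) * ∑ a : Fin 3, ∑ b : Fin 3, W a b := by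
      rw [Complex.mul_re]
      simp [hWdef, hQdef, Complex.re_sum, apply_ite Complex.re]
    rw [hre] at hwin
    exact hwin
  have hW11 : 1 - 9 * ε ≤ W 1 1 := by
    have h9 : ∑ a : Fin 3, ∑ b : Fin 3, W a b ≤ W 1 1 + 8 := by
      simp only [Fin.sum_univ_three]
      linarith [hW1 0 0, hW1 0 1, hW1 0 2, hW1 1 0, hW1 1 2, hW1 2 0, hW1 2 1, hW1 2 2]
    linarith
  -- the (1,1) winning condition is x₁ = y₁
  have hcond : ∀ x0 x1 y0 y1 : Bool, (xtrip x0 x1 1 = ytrip y0 y1 1) ↔ x1 = y1 := by decide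
  have hWexp : W 1 1 =
      Q 1 1 true true true true + Q 1 1 true true false true +
      Q 1 1 true false true false + Q 1 1 true false false false +
      Q 1 1 false true true true + Q 1 1 false true false true +
      Q 1 1 false false true false + Q 1 1 false false false false := by
    simp only [hWdef, Fintype.sum_bool, hcond]
    norm_num
    ring
  have htot11 := htot 1 1
  simp only [Fintype.sum_bool] at htot11
  -- expand the goal
  have hgoal : (star ρ ⬝ᵥ
        (((∑ x0 : Bool, ∑ x1 : Bool, (if x1 then (-1 : ℂ) else 1) • M 1 x0 x1) ⊗ₖ
          (∑ y0 : Bool, ∑ y1 : Bool, (if y1 then (-1 : ℂ) else 1) • N 1 y0 y1)) *ᵥ ρ)).re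
      = (Q 1 1 true true true true + Q 1 1 true true false true +
         Q 1 1 true false true false + Q 1 1 true false false false +
         Q 1 1 false true true true + Q 1 1 false true false true +
         Q 1 1 false false true false + Q 1 1 false false false false)
      - (Q 1 1 true true true false + Q 1 1 true true false false +
         Q 1 1 true false true true + Q 1 1 true false false true +
         Q 1 1 false true true false + Q 1 1 false true false false +
         Q 1 1 false false true true + Q 1 1 false false false true) := by
    simp only [hQdef, Fintype.sum_bool, if_true, Bool.false_eq_true, if_false, one_smul,
      Matrix.add_kronecker, Matrix.kronecker_add, Matrix.smul_kronecker, Matrix.kronecker_smul,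
      Matrix.add_mulVec, Matrix.smul_mulVec, dotProduct_add, dotProduct_smul,
      smul_eq_mul, neg_one_mul, neg_mul, neg_neg, one_mul, neg_add,
      Complex.add_re, Complex.neg_re]
    ring
  rw [hgoal]
  have l1 := hQnn 1 1 true true true false
  have l2 := hQnn 1 1 true true false false
  have l3 := hQnn 1 1 true false true true
  have l4 := hQnn 1 1 true false false true
  have l5 := hQnn 1 1 false true true false
  have l6 := hQnn 1 1 false true false false
  have l7 := hQnn 1 1 false false true true
  have l8 := hQnn 1 1 false false false true
  linarith [hWexp ▸ hW11]
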